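/- Let n ≥ 2 and let G = BS(1,n) = ⟨a, t ∣ t a t⁻¹ = aⁿ⟩ be the Baumslag–Solitar group, with generating set S = {a, t}. Then the kernel of the natural action of G on every asymptotic cone is trivial: for every g ∈ G with g ≠ 1, every nonprincipal ultrafilter ω on ℕ, and every unbounded nondecreasing sequence (d_k) of positive real numbers, there exists a sequence (x_k) in G such that (‖x_k‖_S/d_k) is bounded and the sequence ‖x_k⁻¹ g x_k‖_S / d_k does not converge to 0 along ω. -/

import Mathlib

open Filter

/-- The word length of `g` with respect to a generating set `S`. -/
noncomputable def wordLength {G : Type*} [Group G] (S : Set G) (g : G) : ℕ :=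
  sInf {n | ∃ l : List G, (∀ x ∈ l, x ∈ S ∨ x⁻¹ ∈ S) ∧ l.length = n ∧ l.prod = g}

/-- The defining relation of the Baumslag–Solitar group `BS(1,n)`: with `a` the generator
`0` and `t` the generator `1` of the free group on two letters, the relator is
`t a t⁻¹ a⁻ⁿ`. -/
def BSrel (n : ℕ) : Set (FreeGroup (Fin 2)) :=
  {FreeGroup.of 1 * FreeGroup.of 0 * (FreeGroup.of 1)⁻¹ * (FreeGroup.of 0 ^ n)⁻¹}

/-- The Baumslag–Solitar group `BS(1,n) = ⟨a, t ∣ t a t⁻¹ = aⁿ⟩`. -/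
def BS (n : ℕ) : Type := PresentedGroup (BSrel n)

instance (n : ℕ) : Group (BS n) := by unfold BS; infer_instance

namespace BSaux

variable {n : ℕ}

/-- the generator a -/
def aa (n : ℕ) : BS n := PresentedGroup.of 0
/-- the generator t -/
def tt (n : ℕ) : BS n := PresentedGroup.of 1

lemma rel1 (n : ℕ) : tt n * aa n * (tt n)⁻¹ = aa n ^ n := by
  have h1 : (PresentedGroup.mk (BSrel n))
      (FreeGroup.of 1 * FreeGroup.of 0 * (FreeGroup.of 1)⁻¹ * ((FreeGroup.of 0 : FreeGroup (Fin 2)) ^ n)⁻¹) = 1 := by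
    apply (QuotientGroup.eq_one_iff _).2
    exact Subgroup.subset_normalClosure (by simp [BSrel])
  simp only [map_mul, map_inv, map_pow] at h1
  have : tt n * aa n * (tt n)⁻¹ * ((aa n) ^ n)⁻¹ = 1 := h1
  exact mul_inv_eq_one.mp this

end BSaux
namespace BSaux

lemma rel_zpow (n : ℕ) (j : ℤ) : tt n * aa n ^ j * (tt n)⁻¹ = aa n ^ ((n : ℤ) * j) := by
  rw [← conj_zpow, rel1, ← zpow_natCast (aa n) n, ← zpow_mul]

lemma rel_pow_conj (n : ℕ) (i : ℕ) :
    tt n ^ i * aa n * (tt n ^ i)⁻¹ = aa n ^ ((n : ℤ) ^ i) := by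
  induction i with
  | zero => simp
  | succ i ih =>
    have : tt n ^ (i+1) * aa n * (tt n ^ (i+1))⁻¹
        = tt n ^ i * (tt n * aa n * (tt n)⁻¹) * (tt n ^ i)⁻¹ := by
      rw [pow_succ]; group
    rw [this, rel1, ← conj_pow, ih, ← zpow_natCast (aa n ^ ((n:ℤ)^i)) n, ← zpow_mul,
      pow_succ]

lemma exists_word (g : BS n) :
    ∃ l : List (BS n), (∀ x ∈ l, x ∈ ({aa n, tt n} : Set (BS n)) ∨ x⁻¹ ∈ ({aa n, tt n} : Set (BS n)))
      ∧ l.prod = g := by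
  have hmem : g ∈ Subgroup.closure ({aa n, tt n} : Set (BS n)) := by
    have hr : Set.range (PresentedGroup.of : Fin 2 → PresentedGroup (BSrel n))
        = ({aa n, tt n} : Set (BS n)) := by
      ext x
      constructor
      · rintro ⟨i, rfl⟩
        fin_cases i
        · exact Or.inl rfl
        · exact Or.inr rfl
      · rintro (rfl | rfl)
        · exact ⟨0, rfl⟩
        · exact ⟨1, rfl⟩
    have := PresentedGroup.closure_range_of (BSrel n)
    rw [hr] at this
    exact (Subgroup.eq_top_iff' _).mp this g
  induction hmem using Subgroup.closure_induction with
  | mem x hx => exact ⟨[x], by simpa using Or.inl hx, by simp⟩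
  | one => exact ⟨[], by simp, by simp⟩
  | mul x y _ _ hx hy =>
    obtain ⟨l1, h1, p1⟩ := hx
    obtain ⟨l2, h2, p2⟩ := hy
    exact ⟨l1 ++ l2, by
      intro z hz
      rcases List.mem_append.mp hz with h | h
      exacts [h1 z h, h2 z h], by simp [p1, p2]⟩
  | inv x _ hx =>
    obtain ⟨l, h1, p1⟩ := hx
    refine ⟨(l.map Inv.inv).reverse, ?_, ?_⟩
    · intro z hz
      simp only [List.mem_reverse, List.mem_map] at hz
      obtain ⟨w, hw, rfl⟩ := hz
      rcases h1 w hw with h | h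
      · exact Or.inr (by simpa using h)
      · exact Or.inl h
    · rw [← List.prod_inv_reverse, p1]

end BSaux
namespace BSaux

lemma normal_form (g : BS n) :
    ∃ (i k : ℕ) (j : ℤ), g = (tt n ^ i)⁻¹ * aa n ^ j * tt n ^ k := by
  obtain ⟨l, hl, rfl⟩ := exists_word g
  induction l with
  | nil => exact ⟨0, 0, 0, by simp⟩
  | cons x l ih =>
    obtain ⟨i, k, j, hw⟩ := ih (fun z hz => hl z (List.mem_cons_of_mem x hz))
    rw [List.prod_cons, hw]
    rcases hl x List.mem_cons_self with (rfl | rfl) | h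
    · -- x = aa
      refine ⟨i, k, (n:ℤ)^i + j, ?_⟩
      have h := rel_pow_conj n i
      rw [zpow_add, ← h]
      group
    · -- x = tt
      cases i with
      | zero =>
        refine ⟨0, k + 1, (n:ℤ) * j, ?_⟩
        have h := rel_zpow n j
        rw [← h, pow_succ]
        group
      | succ i' =>
        refine ⟨i', k, j, ?_⟩
        rw [pow_succ]
        group
    · rcases h with h | h
      · -- x = aa⁻¹
        obtain rfl : x = (aa n)⁻¹ := inv_eq_iff_eq_inv.mp h
        refine ⟨i, k, -(n:ℤ)^i + j, ?_⟩
        have h := rel_pow_conj n i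
        rw [zpow_add, zpow_neg, ← h]
        group
      · -- x = tt⁻¹
        obtain rfl : x = (tt n)⁻¹ := inv_eq_iff_eq_inv.mp h
        refine ⟨i + 1, k, j, ?_⟩
        rw [pow_succ]
        group

end BSaux
namespace BSaux

variable {n : ℕ}

/-- translation by 1 -/
def A : Equiv.Perm ℚ := Equiv.addRight 1

lemma nQ_pos (hn : 2 ≤ n) : (0:ℚ) < (n:ℚ) := by
  have : (2:ℚ) ≤ (n:ℚ) := by exact_mod_cast hn
  linarith

/-- multiplication by n -/
def T (n : ℕ) (hn : 2 ≤ n) : Equiv.Perm ℚ :=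
  Equiv.mulLeft₀ (n : ℚ) (ne_of_gt (nQ_pos hn))

@[simp] lemma A_apply (q : ℚ) : A q = q + 1 := rfl

@[simp] lemma A_inv_apply (q : ℚ) : A⁻¹ q = q - 1 := by
  show (Equiv.addRight (1:ℚ)).symm q = q - 1
  simp
  ring

@[simp] lemma T_apply (hn : 2 ≤ n) (q : ℚ) : T n hn q = n * q := rfl

@[simp] lemma T_inv_apply (hn : 2 ≤ n) (q : ℚ) : (T n hn)⁻¹ q = (n:ℚ)⁻¹ * q := by
  show (Equiv.mulLeft₀ (n:ℚ) _).symm q = (n:ℚ)⁻¹ * q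
  simp

lemma A_zpow_apply (j : ℤ) : ∀ q : ℚ, (A ^ j) q = q + j := by
  induction j using Int.induction_on with
  | zero => simp
  | succ i ih =>
    intro q
    rw [zpow_add_one, Equiv.Perm.mul_apply, A_apply, ih]; push_cast; ring
  | pred i ih =>
    intro q
    rw [zpow_sub_one, Equiv.Perm.mul_apply, A_inv_apply, ih]; push_cast; ring

lemma T_zpow_apply (hn : 2 ≤ n) (j : ℤ) : ∀ q : ℚ, ((T n hn) ^ j) q = (n:ℚ)^j * q := by
  have h0 : (n:ℚ) ≠ 0 := ne_of_gt (nQ_pos hn)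
  induction j using Int.induction_on with
  | zero => simp
  | succ i ih =>
    intro q
    rw [zpow_add_one, Equiv.Perm.mul_apply, T_apply, ih, zpow_add_one₀ h0]; ring
  | pred i ih =>
    intro q
    rw [zpow_sub_one, Equiv.Perm.mul_apply, T_inv_apply, ih, zpow_sub_one₀ h0]
    field_simp

lemma A_pow_inv_apply (m : ℕ) (q : ℚ) : ((A ^ m)⁻¹) q = q - m := by
  have : ((A : Equiv.Perm ℚ) ^ m)⁻¹ = A ^ (-(m:ℤ)) := by rw [zpow_neg, zpow_natCast]
  rw [this, A_zpow_apply]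
  push_cast; ring

/-- The representation of BS(1,n) by affine transformations of ℚ. -/
noncomputable def phi (n : ℕ) (hn : 2 ≤ n) : BS n →* Equiv.Perm ℚ :=
  PresentedGroup.toGroup (f := ![A, T n hn]) (by
    intro r hr
    rw [BSrel, Set.mem_singleton_iff] at hr
    subst hr
    simp only [map_mul, map_inv, map_pow, FreeGroup.lift_apply_of]
    ext q
    have h0 : (n:ℚ) ≠ 0 := ne_of_gt (nQ_pos hn)
    simp only [Equiv.Perm.mul_apply, Matrix.cons_val_one, Matrix.head_cons,
      Matrix.cons_val_zero, Equiv.Perm.one_apply, A_pow_inv_apply, T_inv_apply hn,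
      T_apply hn, A_apply]
    field_simp
    ring)

@[simp] lemma phi_aa (hn : 2 ≤ n) : phi n hn (aa n) = A :=
  PresentedGroup.toGroup.of _

@[simp] lemma phi_tt (hn : 2 ≤ n) : phi n hn (tt n) = T n hn :=
  PresentedGroup.toGroup.of _

end BSaux
namespace BSaux

variable {n : ℕ}

lemma word_bound (hn : 2 ≤ n) :
    ∀ l : List (BS n), (∀ x ∈ l, x ∈ ({aa n, tt n} : Set (BS n)) ∨ x⁻¹ ∈ ({aa n, tt n} : Set (BS n))) →
      |phi n hn l.prod 0| ≤ (n:ℚ) ^ (2 * l.length) := by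
  intro l
  induction l with
  | nil => intro _; simp
  | cons x l ih =>
    intro hl
    have hq := ih (fun z hz => hl z (List.mem_cons_of_mem x hz))
    set q : ℚ := phi n hn l.prod 0 with hqdef
    have hn1 : (1:ℚ) ≤ (n:ℚ)^(2 * l.length) := one_le_pow₀ (by exact_mod_cast Nat.one_le_of_lt hn)
    have hn2 : (2:ℚ) ≤ (n:ℚ) := by exact_mod_cast hn
    have key : ∀ r : ℚ, |r| ≤ (n:ℚ) * |q| + 1 → |r| ≤ (n:ℚ) ^ (2 * (x :: l).length) := by
      intro r hr
      have hexp : 2 * (x :: l).length = 2 * l.length + 2 := by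
        rw [List.length_cons]; ring
      rw [hexp, pow_add]
      have habs : (0:ℚ) ≤ |q| := abs_nonneg q
      nlinarith [abs_nonneg r]
    have hprod : phi n hn (x :: l).prod 0 = phi n hn x q := by
      rw [List.prod_cons, map_mul, Equiv.Perm.mul_apply]
    rw [hprod]
    rcases hl x List.mem_cons_self with (rfl | rfl) | h
    · rw [phi_aa]
      apply key
      rw [A_apply]
      calc |q + 1| ≤ |q| + 1 := abs_add_le q 1
        _ ≤ (n:ℚ) * |q| + 1 := by nlinarith [abs_nonneg q]
    · rw [phi_tt]
      apply key
      rw [T_apply]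
      rw [abs_mul, abs_of_nonneg (le_of_lt (nQ_pos hn))]
      linarith [abs_nonneg q]
    · rcases h with h | h
      · obtain rfl : x = (aa n)⁻¹ := inv_eq_iff_eq_inv.mp h
        rw [map_inv, phi_aa]
        apply key
        rw [A_inv_apply]
        calc |q - 1| ≤ |q| + 1 := abs_sub q 1
          _ ≤ (n:ℚ) * |q| + 1 := by nlinarith [abs_nonneg q]
      · obtain rfl : x = (tt n)⁻¹ := inv_eq_iff_eq_inv.mp h
        rw [map_inv, phi_tt]
        apply key
        rw [T_inv_apply]
        rw [abs_mul, abs_of_nonneg (le_of_lt (inv_pos.mpr (nQ_pos hn)))]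
        have : (n:ℚ)⁻¹ ≤ 1 := by
          rw [inv_le_one_iff₀]; right; linarith
        nlinarith [abs_nonneg q]

lemma phi_le_wordLength (hn : 2 ≤ n) (g : BS n) :
    |phi n hn g 0| ≤ (n:ℚ) ^ (2 * wordLength ({aa n, tt n} : Set (BS n)) g) := by
  have hne : {m | ∃ l : List (BS n),
      (∀ x ∈ l, x ∈ ({aa n, tt n} : Set (BS n)) ∨ x⁻¹ ∈ ({aa n, tt n} : Set (BS n)))
      ∧ l.length = m ∧ l.prod = g}.Nonempty := by
    obtain ⟨l, hl, hp⟩ := exists_word g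
    exact ⟨l.length, l, hl, rfl, hp⟩
  obtain ⟨l, hl, hlen, hp⟩ := Nat.sInf_mem hne
  subst hp
  unfold wordLength
  rw [← hlen]
  exact word_bound hn l hl

lemma wordLength_le {G : Type*} [Group G] (S : Set G) (g : G) (l : List G)
    (hl : ∀ x ∈ l, x ∈ S ∨ x⁻¹ ∈ S) (hp : l.prod = g) : wordLength S g ≤ l.length :=
  Nat.sInf_le ⟨l, hl, rfl, hp⟩

end BSaux
namespace BSaux

variable {n : ℕ}

lemma T_pow_apply (hn : 2 ≤ n) (L : ℕ) (q : ℚ) : (T n hn ^ L) q = (n:ℚ)^L * q := by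
  rw [← zpow_natCast (T n hn) L, T_zpow_apply, zpow_natCast]

lemma T_pow_inv_apply (hn : 2 ≤ n) (L : ℕ) (q : ℚ) :
    ((T n hn ^ L)⁻¹) q = ((n:ℚ)^L)⁻¹ * q := by
  rw [← zpow_natCast (T n hn) L, ← zpow_neg, T_zpow_apply, zpow_neg, zpow_natCast]

lemma val_case1 (hn : 2 ≤ n) (i kk : ℕ) (j : ℤ) (L : ℕ) :
    phi n hn (tt n ^ L * ((tt n ^ i)⁻¹ * aa n ^ j * tt n ^ kk) * (tt n ^ L)⁻¹) 0
      = (n:ℚ)^L * ((n:ℚ)^i)⁻¹ * j := by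
  have h0 : (n:ℚ) ≠ 0 := ne_of_gt (nQ_pos hn)
  simp only [map_mul, map_inv, map_zpow, map_pow, phi_aa, phi_tt, Equiv.Perm.mul_apply,
    T_pow_apply hn, T_pow_inv_apply hn, A_zpow_apply]
  ring

lemma val_case2 (hn : 2 ≤ n) (i kk : ℕ) (L : ℕ) :
    phi n hn (tt n ^ L * (aa n)⁻¹ * (tt n ^ L)⁻¹ * ((tt n ^ i)⁻¹ * aa n ^ (0:ℤ) * tt n ^ kk)
        * (tt n ^ L * aa n * (tt n ^ L)⁻¹)) 0
      = (n:ℚ)^L * (((n:ℚ)^i)⁻¹ * (n:ℚ)^kk - 1) := by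
  have h0 : (n:ℚ) ≠ 0 := ne_of_gt (nQ_pos hn)
  simp only [map_mul, map_inv, map_zpow, map_pow, phi_aa, phi_tt, Equiv.Perm.mul_apply,
    T_pow_apply hn, T_pow_inv_apply hn, A_zpow_apply, A_inv_apply, A_apply]
  field_simp
  push_cast; ring

end BSaux

/-- The kernel of the natural action of `BS(1,n)` (`n ≥ 2`) on every asymptotic cone is
trivial: every `g ≠ 1` is moved away from some admissible sequence. -/
theorem coneKernel_trivial_BS (n : ℕ) (hn : 2 ≤ n)
    (a t : BS n) (ha : a = PresentedGroup.of 0) (ht : t = PresentedGroup.of 1)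
    (g : BS n) (hg : g ≠ 1)
    (ω : Ultrafilter ℕ) (hω : ∀ A ∈ ω, A.Infinite)
    (d : ℕ → ℝ) (hd_pos : ∀ k, 0 < d k) (hd_mono : Monotone d)
    (hd_unbdd : ∀ B : ℝ, ∃ k, B < d k) :
    ∃ x : ℕ → BS n,
      (∃ B : ℝ, ∀ k, (wordLength {a, t} (x k) : ℝ) / d k ≤ B) ∧
      ¬ Tendsto (fun k => (wordLength {a, t} ((x k)⁻¹ * g * x k) : ℝ) / d k)
          (ω : Filter ℕ) (nhds 0) := by
  have ha' : a = BSaux.aa n := ha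
  have ht' : t = BSaux.tt n := ht
  subst ha' ht'
  set S : Set (BS n) := {BSaux.aa n, BSaux.tt n} with hS
  have h1n : (1:ℚ) < (n:ℚ) := by exact_mod_cast lt_of_lt_of_le one_lt_two hn
  have h0n : (0:ℚ) < (n:ℚ) := lt_trans one_pos h1n
  have hnne : (n:ℚ) ≠ 0 := ne_of_gt h0n
  have h2n : (2:ℚ) ≤ (n:ℚ) := by exact_mod_cast hn
  have hinv : ((n:ℚ))⁻¹ ≤ 1/2 := by
    rw [one_div]
    exact inv_anti₀ two_pos h2n
  set L : ℕ → ℕ := fun m => ⌈d m⌉₊ with hLdef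
  have hLle : ∀ m, (L m : ℝ) < d m + 1 := fun m => Nat.ceil_lt_add_one (hd_pos m).le
  have hLge : ∀ m, d m ≤ (L m : ℝ) := fun m => Nat.le_ceil (d m)
  obtain ⟨i, kk, j, hgnf⟩ := BSaux.normal_form g
  have key : ∃ (K : ℕ) (x : ℕ → BS n),
      (∀ m : ℕ, (wordLength S (x m) : ℝ) ≤ 2 * d m + 3) ∧
      (∀ m : ℕ, (n:ℚ) ^ ((L m : ℤ) - (K:ℤ)) ≤ |BSaux.phi n hn ((x m)⁻¹ * g * x m) 0|) := by
    rcases eq_or_ne j 0 with rfl | hj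
    · -- case j = 0 : g is a power of t
      have hm0 : (kk:ℤ) - (i:ℤ) ≠ 0 := by
        intro h
        apply hg
        have hik : kk = i := by omega
        rw [hgnf, hik]
        simp
      refine ⟨1, fun m => BSaux.tt n ^ (L m) * BSaux.aa n * (BSaux.tt n ^ (L m))⁻¹, fun m => ?_, fun m => ?_⟩
      · set l : List (BS n) :=
          List.replicate (L m) (BSaux.tt n) ++ (BSaux.aa n) :: List.replicate (L m) (BSaux.tt n)⁻¹ with hl
        have hwl : wordLength S (BSaux.tt n ^ (L m) * BSaux.aa n * (BSaux.tt n ^ (L m))⁻¹) ≤ l.length := by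
          apply BSaux.wordLength_le
          · intro z hz
            rw [hl, List.mem_append, List.mem_cons] at hz
            rcases hz with hz | hz | hz
            · rw [List.eq_of_mem_replicate hz]; left; exact Or.inr rfl
            · rw [hz]; left; exact Or.inl rfl
            · rw [List.eq_of_mem_replicate hz]; right; rw [inv_inv]; exact Or.inr rfl
          · rw [hl, List.prod_append, List.prod_cons, List.prod_replicate,
              List.prod_replicate, inv_pow, ← mul_assoc]
        have hlen : l.length = 2 * L m + 1 := by
          simp [hl]
          omega
        rw [hlen] at hwl
        have h1 := hLle m
        have h2 := hd_pos m
        calc (wordLength S (BSaux.tt n ^ (L m) * BSaux.aa n * (BSaux.tt n ^ (L m))⁻¹) : ℝ)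
            ≤ ((2 * L m + 1 : ℕ) : ℝ) := by exact_mod_cast hwl
          _ = 2 * (L m : ℝ) + 1 := by push_cast; ring
          _ ≤ 2 * d m + 3 := by linarith
      · have hc : (BSaux.tt n ^ (L m) * BSaux.aa n * (BSaux.tt n ^ (L m))⁻¹)⁻¹ * g
              * (BSaux.tt n ^ (L m) * BSaux.aa n * (BSaux.tt n ^ (L m))⁻¹)
            = BSaux.tt n ^ (L m) * (BSaux.aa n)⁻¹ * (BSaux.tt n ^ (L m))⁻¹
              * ((BSaux.tt n ^ i)⁻¹ * BSaux.aa n ^ (0:ℤ) * BSaux.tt n ^ kk)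
              * (BSaux.tt n ^ (L m) * BSaux.aa n * (BSaux.tt n ^ (L m))⁻¹) := by
          rw [hgnf]; group
        rw [hc, BSaux.val_case2 hn, abs_mul]
        have e1 : |(n:ℚ)^(L m)| = (n:ℚ)^(L m) := abs_of_pos (pow_pos h0n _)
        rw [e1]
        have e2 : ((n:ℚ)^i)⁻¹ * (n:ℚ)^kk = (n:ℚ)^((kk:ℤ) - (i:ℤ)) := by
          rw [zpow_sub₀ hnne, zpow_natCast, zpow_natCast, div_eq_mul_inv]; ring
        rw [e2]
        have e3 : (1:ℚ)/2 ≤ |(n:ℚ)^((kk:ℤ)-(i:ℤ)) - 1| := by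
          rcases lt_or_gt_of_ne hm0 with hneg | hpos
          · have h1 : (n:ℚ)^((kk:ℤ)-(i:ℤ)) ≤ (n:ℚ)^(-1:ℤ) :=
              zpow_le_zpow_right₀ (le_of_lt h1n) (by omega)
            rw [zpow_neg_one] at h1
            have h4 : 0 < (n:ℚ)^((kk:ℤ)-(i:ℤ)) := zpow_pos h0n _
            rw [abs_sub_comm, abs_of_nonneg (by linarith)]
            linarith
          · have h1 : (n:ℚ)^(1:ℤ) ≤ (n:ℚ)^((kk:ℤ)-(i:ℤ)) :=
              zpow_le_zpow_right₀ (le_of_lt h1n) (by omega)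
            rw [zpow_one] at h1
            rw [abs_of_nonneg (by linarith)]
            linarith
        have e5 : (n:ℚ)^((L m:ℤ) - 1) = (n:ℚ)^(L m) * ((n:ℚ))⁻¹ := by
          rw [zpow_sub₀ hnne, zpow_natCast, zpow_one, div_eq_mul_inv]
        simp only [Nat.cast_one]
        rw [e5]
        exact mul_le_mul_of_nonneg_left (le_trans hinv e3) (le_of_lt (pow_pos h0n _))
    · -- case j ≠ 0
      refine ⟨i, fun m => (BSaux.tt n ^ (L m))⁻¹, fun m => ?_, fun m => ?_⟩
      · have hwl : wordLength S ((BSaux.tt n ^ (L m))⁻¹) ≤ (List.replicate (L m) (BSaux.tt n)⁻¹).length := by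
          apply BSaux.wordLength_le
          · intro z hz
            rw [List.eq_of_mem_replicate hz]
            right
            rw [inv_inv]
            exact Or.inr rfl
          · rw [List.prod_replicate, inv_pow]
        rw [List.length_replicate] at hwl
        have h1 := hLle m
        have h2 := hd_pos m
        calc (wordLength S ((BSaux.tt n ^ (L m))⁻¹) : ℝ) ≤ (L m : ℝ) := by exact_mod_cast hwl
          _ ≤ 2 * d m + 3 := by linarith
      · have hc : ((BSaux.tt n ^ (L m))⁻¹)⁻¹ * g * (BSaux.tt n ^ (L m))⁻¹
            = BSaux.tt n ^ (L m) * ((BSaux.tt n ^ i)⁻¹ * BSaux.aa n ^ j * BSaux.tt n ^ kk) * (BSaux.tt n ^ (L m))⁻¹ := by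
          rw [hgnf, inv_inv]
        rw [hc, BSaux.val_case1 hn, abs_mul, abs_mul]
        have e1 : |(n:ℚ)^(L m)| = (n:ℚ)^(L m) := abs_of_pos (pow_pos h0n _)
        have e2 : |((n:ℚ)^i)⁻¹| = ((n:ℚ)^i)⁻¹ := abs_of_pos (by positivity)
        have e3 : (1:ℚ) ≤ |(j:ℚ)| := by exact_mod_cast Int.one_le_abs hj
        rw [e1, e2]
        have e4 : (n:ℚ) ^ ((L m : ℤ) - (i:ℤ)) = (n:ℚ)^(L m) * ((n:ℚ)^i)⁻¹ := by
          rw [zpow_sub₀ hnne, zpow_natCast, zpow_natCast, div_eq_mul_inv]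
        rw [e4]
        have h5 := mul_le_mul_of_nonneg_left e3
          (le_of_lt (show (0:ℚ) < (n:ℚ)^(L m) * ((n:ℚ)^i)⁻¹ by positivity))
        rw [mul_one] at h5
        exact h5
  obtain ⟨K, x, hxlen, hxval⟩ := key
  refine ⟨x, ⟨2 + 3 / d 0, fun m => ?_⟩, ?_⟩
  · rw [div_le_iff₀ (hd_pos m)]
    have h1 := hxlen m
    have hd0 : 0 < d 0 := hd_pos 0
    have hdm : d 0 ≤ d m := hd_mono (Nat.zero_le m)
    have h2 : 3 / d 0 * d 0 ≤ 3 / d 0 * d m :=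
      mul_le_mul_of_nonneg_left hdm (by positivity)
    rw [div_mul_cancel₀ (3:ℝ) (ne_of_gt hd0)] at h2
    nlinarith
  · intro hT
    have hW : ∀ m, ((L m : ℝ) - K) / 2 ≤ (wordLength S ((x m)⁻¹ * g * x m) : ℝ) := by
      intro m
      have h1 := hxval m
      have h2 := BSaux.phi_le_wordLength hn ((x m)⁻¹ * g * x m)
      have h3 : (n:ℚ) ^ ((L m : ℤ) - (K:ℤ))
          ≤ (n:ℚ) ^ ((2 * wordLength S ((x m)⁻¹ * g * x m) : ℕ) : ℤ) := by
        rw [zpow_natCast]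
        exact le_trans h1 h2
      have h4 : (L m : ℤ) - (K:ℤ) ≤ ((2 * wordLength S ((x m)⁻¹ * g * x m) : ℕ) : ℤ) :=
        (zpow_le_zpow_iff_right₀ h1n).mp h3
      have h5 : (L m : ℝ) - K ≤ 2 * (wordLength S ((x m)⁻¹ * g * x m) : ℝ) := by
        exact_mod_cast h4
      linarith
    obtain ⟨k0, hk0⟩ := hd_unbdd (2 * K)
    have hev2 : ∀ m, k0 ≤ m → (1:ℝ)/4 ≤ (wordLength S ((x m)⁻¹ * g * x m) : ℝ) / d m := by
      intro m hm
      have hdm : 2 * K ≤ d m := le_trans (le_of_lt hk0) (hd_mono hm)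
      have h1 := hW m
      have h2 := hLge m
      rw [le_div_iff₀ (hd_pos m)]
      linarith
    have hIci : {m | k0 ≤ m} ∈ ω := by
      by_contra hcon
      have hc2 : {m | k0 ≤ m}ᶜ ∈ ω := (Ultrafilter.compl_mem_iff_notMem).mpr hcon
      have hfin : ({m | k0 ≤ m}ᶜ : Set ℕ).Finite := by
        have he : ({m | k0 ≤ m}ᶜ : Set ℕ) = Set.Iio k0 := by
          ext m; simp [not_le]
        rw [he]; exact Set.finite_Iio k0
      exact hfin.not_infinite (hω _ hc2)
    have hev' : ∀ᶠ m in (ω : Filter ℕ), k0 ≤ m := hIci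
    have hsmall : ∀ᶠ m in (ω : Filter ℕ),
        dist ((wordLength S ((x m)⁻¹ * g * x m) : ℝ) / d m) 0 < 1/4 :=
      Metric.tendsto_nhds.mp hT (1/4) (by norm_num)
    obtain ⟨m, hm1, hm2⟩ := (hsmall.and hev').exists
    have hnn : 0 ≤ (wordLength S ((x m)⁻¹ * g * x m) : ℝ) / d m :=
      div_nonneg (Nat.cast_nonneg _) (hd_pos m).le
    rw [Real.dist_eq, sub_zero, abs_of_nonneg hnn] at hm1
    exact absurd hm1 (not_lt.mpr (hev2 m hm2))
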